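/- For every integer n ≥ 1 and complex t with |t| < 1, the regularized hypergeometric function satisfies ₂F̃₁(1/2 - n, 1 - n; 2 - n; t) = 2 (1/2)_n · t^{n-1}. -/
import Mathlib


open scoped BigOperators

/-- Pochhammer symbol `(a)_k` on `ℂ`. -/
noncomputable def pochC (a : ℂ) (k : ℕ) : ℂ := ∏ i ∈ Finset.range k, (a + i)

/-- Regularized Gauss hypergeometric function `₂F̃₁(a,b;c;z) = ∑ (a)_k (b)_k / Γ(c+k) · z^k/k!`. -/
noncomputable def hyp2F1reg (a b c z : ℂ) : ℂ :=
  ∑' k : ℕ, pochC a k * pochC b k / (Complex.Gamma (c + k) * (k.factorial : ℂ)) * z ^ k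

lemma pochC_succ (a : ℂ) (k : ℕ) : pochC a (k+1) = pochC a k * (a + k) :=
  Finset.prod_range_succ _ _

lemma pochC_succ' (a : ℂ) (k : ℕ) : pochC a (k+1) = a * pochC (a+1) k := by
  unfold pochC
  rw [Finset.prod_range_succ']
  simp only [Nat.cast_zero, add_zero]
  rw [mul_comm]
  congr 1
  refine Finset.prod_congr rfl fun i _ => ?_
  push_cast
  ring

lemma pochC_one_eq (m : ℕ) : pochC 1 m = (m.factorial : ℂ) := by
  induction m with
  | zero => simp [pochC]
  | succ m ih =>
    rw [pochC_succ, ih, Nat.factorial_succ]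
    push_cast
    ring

lemma pochC_shift (a : ℂ) (m : ℕ) : pochC (a - m) m = (-1)^m * pochC (1 - a) m := by
  induction m with
  | zero => simp [pochC]
  | succ m ih =>
    rw [pochC_succ', pochC_succ]
    have h1 : a - (↑(m+1) : ℂ) + 1 = a - m := by push_cast; ring
    rw [show a - ((m:ℕ)+1 : ℕ) + 1 = a - m by push_cast; ring] <;> try skip
    rw [ih]
    push_cast
    ring

theorem reg_reduction_fourth_diff (n : ℕ) (hn : 1 ≤ n) (t : ℂ) (ht : ‖t‖ < 1) :
    hyp2F1reg (1/2 - n) (1 - n) (2 - n) t = 2 * pochC (1/2) n * t ^ (n - 1) := by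
  obtain ⟨m, rfl⟩ : ∃ m, n = m + 1 := ⟨n - 1, (Nat.succ_pred_eq_of_pos hn).symm⟩
  unfold hyp2F1reg
  rw [tsum_eq_single m]
  · have harg : (2 : ℂ) - ((m+1 : ℕ) : ℂ) + (m : ℂ) = 1 := by push_cast; ring
    rw [harg, Complex.Gamma_one]
    have h1 : (1 : ℂ)/2 - ((m+1 : ℕ) : ℂ) = (-1/2 : ℂ) - (m : ℂ) := by push_cast; ring
    have h2 : (1 : ℂ) - ((m+1 : ℕ) : ℂ) = (0 : ℂ) - (m : ℂ) := by push_cast; ring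
    rw [h1, h2, pochC_shift, pochC_shift]
    norm_num
    rw [pochC_one_eq]
    have h5 : pochC (1/2) (m+1) = (1/2 : ℂ) * pochC (1/2 + 1) m := pochC_succ' _ _
    rw [h5]
    have hf : (m.factorial : ℂ) ≠ 0 := Nat.cast_ne_zero.mpr m.factorial_ne_zero
    have hsq : ((-1:ℂ))^m * (-1)^m = 1 := by rw [← mul_pow]; norm_num
    left
    rw [show (1/2 + 1 : ℂ) = 3/2 by norm_num, div_eq_iff hf]
    linear_combination (pochC (3/2) m * (m.factorial : ℂ)) * hsq
  · intro b hb
    rcases lt_or_gt_of_ne hb with hlt | hgt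
    · have key : (2:ℂ) - ((m+1:ℕ):ℂ) + (b : ℂ) = -((m - (b+1) : ℕ) : ℂ) := by
        push_cast [Nat.cast_sub hlt]
        ring
      rw [key, Complex.Gamma_neg_nat_eq_zero]
      simp
    · have hz : pochC (1 - ((m+1:ℕ):ℂ)) b = 0 := by
        apply Finset.prod_eq_zero (Finset.mem_range.mpr hgt)
        push_cast
        ring
      rw [hz]
      simp
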